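/- If s = W(A^T W)^† F and c = (WA)^† W Φ where A has full column rank and W is invertible, then s^T Φ = F^T c, i.e., applying the flux stencil to the data equals evaluating the flux functional on the least-squares polynomial coefficients. -/
import Mathlib


open Matrix

/-- Moore–Penrose pseudoinverse of a full-column-rank matrix: `B† = (BᵀB)⁻¹Bᵀ`. -/
noncomputable def pinvCol {m n : ℕ} (B : Matrix (Fin m) (Fin n) ℝ) : Matrix (Fin n) (Fin m) ℝ :=
  (Bᵀ * B)⁻¹ * Bᵀ

/-- Moore–Penrose pseudoinverse of a full-row-rank matrix: `B† = Bᵀ(BBᵀ)⁻¹`. -/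
noncomputable def pinvRow {n m : ℕ} (B : Matrix (Fin n) (Fin m) ℝ) : Matrix (Fin m) (Fin n) ℝ :=
  Bᵀ * (B * Bᵀ)⁻¹

/-- Applying the flux stencil `s = W(AᵀW)†F` to the data `Φ` equals evaluating the
flux functional `F` on the weighted least squares coefficients `c = (WA)†WΦ`:
`sᵀ Φ = Fᵀ c`. -/
theorem stencil_apply_eq_flux_functional {m n : ℕ} (hmn : n ≤ m)
    (A : Matrix (Fin m) (Fin n) ℝ) (hA : A.rank = n)
    (W : Matrix (Fin m) (Fin m) ℝ) (hWdiag : W.IsDiag) (hWinv : IsUnit W.det)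
    (Φ : Fin m → ℝ) (F : Fin n → ℝ) (s : Fin m → ℝ) (c : Fin n → ℝ)
    (hs : s = W *ᵥ (pinvRow (Aᵀ * W) *ᵥ F))
    (hc : c = pinvCol (W * A) *ᵥ (W *ᵥ Φ)) :
    s ⬝ᵥ Φ = F ⬝ᵥ c := by
  have hW : Wᵀ = W := hWdiag.isSymm
  subst hs hc
  unfold pinvRow pinvCol
  rw [Matrix.mulVec_mulVec, Matrix.mulVec_mulVec, dotProduct_comm,
    Matrix.dotProduct_mulVec, dotProduct_comm,
    show Φ ᵥ* (W * ((Aᵀ * W)ᵀ * (Aᵀ * W * (Aᵀ * W)ᵀ)⁻¹))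
      = (W * ((Aᵀ * W)ᵀ * (Aᵀ * W * (Aᵀ * W)ᵀ)⁻¹))ᵀ *ᵥ Φ from
      (Matrix.mulVec_transpose _ _).symm]
  congr 1
  simp only [Matrix.transpose_mul, Matrix.transpose_transpose, Matrix.transpose_nonsing_inv, hW,
    Matrix.mulVec_mulVec, Matrix.mul_assoc]
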